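/- The set of prime numbers ℓ such that ℓ ≡ 1 (mod 18) and every point P of the curve y² = x³ − 1 over 𝔽_ℓ = ZMod ℓ with 3 • P = 0 is the zero point, is infinite. -/

import Mathlib

/-- The elliptic curve `y² = x³ + a` over a field `F`. -/
def Ea (F : Type*) [Field F] (a : F) : WeierstrassCurve.Affine F :=
  { a₁ := 0, a₂ := 0, a₃ := 0, a₄ := 0, a₆ := a }

open WeierstrassCurve.Affine WeierstrassCurve.Affine.Point in
lemma Ea_key {F : Type*} [Field F] [DecidableEq F] (h1 : ¬ IsSquare (-1 : F)) (h3 : ¬ IsSquare (3 : F)) :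
    ∀ P : (Ea F (-1)).Point, 3 • P = 0 → P = 0 := by
  have h2 : (2 : F) ≠ 0 := by
    intro h
    exact h1 ⟨1, by linear_combination -h⟩
  have h3ne : (3 : F) ≠ 0 := fun h => h3 ⟨0, by rw [h]; ring⟩
  intro P hP
  rcases P with _ | @⟨x, y, h⟩
  · rfl
  exfalso
  have hE : y ^ 2 = x ^ 3 - 1 := by
    have := h.1
    rw [equation_iff] at this
    simp only [Ea] at this
    linear_combination this
  have hneg : (Ea F (-1)).negY x y = -y := by simp [Ea, negY]
  have h3P : (Point.some _ _ h + Point.some _ _ h) + Point.some _ _ h = 0 := by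
    rw [show (3 : ℕ) • Point.some _ _ h = (Point.some _ _ h + Point.some _ _ h) + Point.some _ _ h by
      rw [succ_nsmul, two_nsmul]] at hP
    exact hP
  have hy0 : y ≠ 0 := by
    intro h0
    have hyy : y = (Ea F (-1)).negY x y := by rw [hneg, h0]; simp
    rw [add_self_of_Y_eq hyy, zero_add] at h3P
    exact some_ne_zero h h3P
  have hyy : y ≠ (Ea F (-1)).negY x y := by
    rw [hneg]
    intro hc
    have h2y : 2 * y = 0 := by linear_combination hc
    rcases mul_eq_zero.mp h2y with h' | h' <;> [exact h2 h'; exact hy0 h']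
  rw [add_self_of_Y_ne hyy] at h3P
  have h2P : Point.some _ _ (nonsingular_add h h fun hxy => hyy hxy.right) = -Point.some _ _ h :=
    eq_neg_of_add_eq_zero_left h3P
  rw [neg_some] at h2P
  have hx : (Ea F (-1)).addX x x ((Ea F (-1)).slope x x y y) = x := by
    injection h2P
  have hslope : (Ea F (-1)).slope x x y y = 3 * x ^ 2 / (2 * y) := by
    rw [slope_of_Y_ne rfl hyy, hneg]
    simp [Ea]
    ring
  rw [hslope, addX] at hx
  simp only [Ea] at hx
  have h2y : (2 : F) * y ≠ 0 := mul_ne_zero h2 hy0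
  field_simp at hx
  have hkey : 3 * x * (x ^ 3 - 4) = 0 := by linear_combination -hx - 12 * x * hE
  rcases mul_eq_zero.mp hkey with hl | hr
  · rcases mul_eq_zero.mp hl with h' | hx0
    · exact h3ne h'
    · exact h1 ⟨y, by linear_combination -hE - x ^ 2 * hx0⟩
  · exact h3 ⟨y, by linear_combination -hE - hr⟩

/-- The set of primes `ℓ ≡ 1 (mod 18)` with `Ẽ₋₁(𝔽_ℓ)[3] = 0` is infinite. -/
theorem stmt5 :
    {ℓ : ℕ | ∃ hℓ : ℓ.Prime, ℓ % 18 = 1 ∧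
      (haveI : Fact ℓ.Prime := ⟨hℓ⟩
       ∀ P : (Ea (ZMod ℓ) (-1)).Point, 3 • P = 0 → P = 0)}.Infinite := by
  have hu : IsUnit (19 : ZMod 36) := by decide
  refine (Nat.infinite_setOfPred_prime_and_eq_mod hu).mono ?_
  rintro ℓ ⟨hp, hmod⟩
  have h36 : ℓ % 36 = 19 := by
    have := (ZMod.natCast_eq_iff 36 ℓ 19).mp (by exact_mod_cast hmod)
    obtain ⟨k, hk⟩ := this
    rw [show (19 : ZMod 36).val = 19 from rfl] at hk
    omega
  haveI : Fact ℓ.Prime := ⟨hp⟩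
  refine ⟨hp, by omega, ?_⟩
  have h1 : ¬ IsSquare (-1 : ZMod ℓ) := by
    rw [ZMod.exists_sq_eq_neg_one_iff]
    omega
  have h3 : ¬ IsSquare (3 : ZMod ℓ) := by
    haveI : Fact (Nat.Prime 3) := ⟨by norm_num⟩
    have hl4 : ℓ % 4 = 3 := by omega
    have hne : ℓ ≠ 3 := by omega
    have := ZMod.exists_sq_eq_prime_iff_of_mod_four_eq_three hl4 (by norm_num) hne
    rw [show ((3 : ℕ) : ZMod ℓ) = (3 : ZMod ℓ) by push_cast; ring] at this
    rw [this]
    intro hns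
    apply hns
    have : ((ℓ : ℕ) : ZMod 3) = 1 := by
      rw [← ZMod.natCast_mod, show ℓ % 3 = 1 by omega]
      norm_num
    rw [this]
    exact IsSquare.one
  exact Ea_key h1 h3
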